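/- Let W ∈ ℝ^{n×n} be symmetric positive definite and T ∈ ℝ^{n×n} be symmetric positive semidefinite. Let λ ∈ ℂ and u = (x; y) ∈ ℂ^{2n} with u ≠ 0 satisfy 𝒜u = λ𝒢_α u, where 𝒜 = [[W, −T], [T, W]] and 𝒢_α = [[W, 0], [αI, W]] for some α ∈ ℝ. Suppose y ≠ 0, λ ≠ 1, and a ≠ 0, where a = (y*Ty)/(y*y), b = (y*TW⁻²Ty)/(y*y), c = (y*TW⁻¹TW⁻¹Ty)/(y*y). If Δ(α) = α²b² + 4a(αb − c) ≤ 0, then |λ − 1|² = (c − αb)/a. -/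

import Mathlib

open Matrix

lemma quad_root_abs (a b c α : ℝ) (ha0 : a ≠ 0) (μ : ℂ)
    (h : (a:ℂ) * μ^2 - ((α*b : ℝ) : ℂ) * μ + ((c - α*b : ℝ) : ℂ) = 0)
    (hΔ : α ^ 2 * b ^ 2 + 4 * a * (α * b - c) ≤ 0) :
    ‖μ‖ ^ 2 = (c - α * b) / a := by
  have hre := congrArg Complex.re h
  have him := congrArg Complex.im h
  simp [Complex.mul_re, Complex.mul_im, pow_two] at hre him
  rw [Complex.sq_norm, Complex.normSq_apply]
  set p := μ.re
  set q := μ.im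
  have h1 : a * (p*p - q*q) - α*b*p + (c - α*b) = 0 := by linarith [hre]
  rcases eq_or_ne q 0 with h0 | h0
  · rw [h0] at h1 ⊢
    have h2 : (2*a*p - α*b)^2 = α^2*b^2 + 4*a*(α*b - c) := by linear_combination 4*a*h1
    have h4 : (2*a*p - α*b)^2 = 0 := le_antisymm (by linarith) (sq_nonneg _)
    have h3 : 2*a*p - α*b = 0 := pow_eq_zero_iff (by norm_num) |>.mp h4
    field_simp
    linear_combination -h1 + p*h3
  · have h2 : 2*a*p - α*b = 0 := by
      rcases mul_eq_zero.mp (show q * (2*a*p - α*b) = 0 by linarith [him]) with h | h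
      · exact absurd h h0
      · exact h
    field_simp
    linear_combination -h1 + p*h2

lemma dot_shift {n : ℕ} (P Q : Matrix (Fin n) (Fin n) ℂ) (y : Fin n → ℂ) :
    star (P *ᵥ y) ⬝ᵥ (Q *ᵥ y) = star y ⬝ᵥ ((Pᴴ * Q) *ᵥ y) := by
  rw [star_mulVec, dotProduct_mulVec, dotProduct_mulVec, vecMul_vecMul]

lemma herm_quad_real {n : ℕ} {M : Matrix (Fin n) (Fin n) ℂ} (hM : M.IsHermitian)
    (v : Fin n → ℂ) : ((star v ⬝ᵥ (M *ᵥ v)).re : ℂ) = star v ⬝ᵥ (M *ᵥ v) := by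
  rw [← Complex.conj_eq_iff_re]
  calc (starRingEnd ℂ) (star v ⬝ᵥ (M *ᵥ v))
      = star (star v ⬝ᵥ (M *ᵥ v)) := rfl
    _ = star (M *ᵥ v) ⬝ᵥ v := (star_dotProduct _ _).symm
    _ = (star v ᵥ* Mᴴ) ⬝ᵥ v := by rw [star_mulVec]
    _ = (star v ᵥ* M) ⬝ᵥ v := by rw [hM.eq]
    _ = star v ⬝ᵥ (M *ᵥ v) := (dotProduct_mulVec _ _ _).symm

open scoped ComplexOrder in
lemma star_dot_self_ne_zero {n : ℕ} {y : Fin n → ℂ} (hy : y ≠ 0) :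
    star y ⬝ᵥ y ≠ 0 :=
  fun h => hy (dotProduct_star_self_eq_zero.mp h)

/-- For an eigenpair `(λ, (x; y))` of `𝒢_α⁻¹𝒜` with `y ≠ 0`, `λ ≠ 1`,
`a ≠ 0` and nonpositive discriminant `Δ(α) = α²b² + 4a(αb - c) ≤ 0`, one has
`|λ - 1|² = (c - αb)/a`. Here `a, b, c` are the (real) Rayleigh quotients. -/
theorem blt_eigen_radius {n : ℕ} (W T : Matrix (Fin n) (Fin n) ℝ)
    (hW : W.PosDef) (hT : T.PosSemidef) (α : ℝ) (lam : ℂ) (x y : Fin n → ℂ)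
    (hu : Sum.elim x y ≠ 0)
    (heig : Matrix.fromBlocks (W.map Complex.ofReal) (-(T.map Complex.ofReal))
        (T.map Complex.ofReal) (W.map Complex.ofReal) *ᵥ Sum.elim x y
      = lam • (Matrix.fromBlocks (W.map Complex.ofReal) 0 ((α : ℂ) • 1)
        (W.map Complex.ofReal) *ᵥ Sum.elim x y))
    (hy : y ≠ 0) (hlam : lam ≠ 1) (a b c : ℝ)
    (ha : a = ((star y ⬝ᵥ (T.map Complex.ofReal *ᵥ y)) / (star y ⬝ᵥ y)).re)
    (hb : b = ((star y ⬝ᵥ ((T.map Complex.ofReal * (W.map Complex.ofReal)⁻¹ ^ 2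
        * T.map Complex.ofReal) *ᵥ y)) / (star y ⬝ᵥ y)).re)
    (hc : c = ((star y ⬝ᵥ ((T.map Complex.ofReal * (W.map Complex.ofReal)⁻¹
        * T.map Complex.ofReal * (W.map Complex.ofReal)⁻¹
        * T.map Complex.ofReal) *ᵥ y)) / (star y ⬝ᵥ y)).re)
    (ha0 : a ≠ 0) (hΔ : α ^ 2 * b ^ 2 + 4 * a * (α * b - c) ≤ 0) :
    ‖lam - 1‖ ^ 2 = (c - α * b) / a := by
  set Wc := W.map Complex.ofReal with hWcdef
  set Tc := T.map Complex.ofReal with hTcdef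
  have hWc : Wc.IsHermitian := hW.1.map Complex.ofReal fun r => (Complex.conj_ofReal r).symm
  have hTc : Tc.IsHermitian := hT.1.map Complex.ofReal fun r => (Complex.conj_ofReal r).symm
  have hdet : IsUnit Wc.det := by
    have h1 : Wc.det = (W.det : ℂ) := (Complex.ofRealHom.map_det W).symm
    rw [h1]
    exact isUnit_iff_ne_zero.mpr (by exact_mod_cast hW.det_pos.ne')
  have hinv1 : Wc⁻¹ * Wc = 1 := nonsing_inv_mul _ hdet
  -- block equations
  rw [fromBlocks_mulVec, fromBlocks_mulVec] at heig
  have e1 : Wc *ᵥ x - Tc *ᵥ y = lam • (Wc *ᵥ x) := by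
    funext i
    have h := congrFun heig (Sum.inl i)
    simpa [neg_mulVec, sub_eq_add_neg] using h
  have e2 : Tc *ᵥ x + Wc *ᵥ y = (lam * α) • x + lam • (Wc *ᵥ y) := by
    funext i
    have h := congrFun heig (Sum.inr i)
    simp only [smul_mulVec, mul_smul] at h ⊢
    simp at h ⊢
    rw [h]; ring
  have hlam1 : (1 : ℂ) - lam ≠ 0 := sub_ne_zero.mpr fun h => hlam h.symm
  set P := Wc⁻¹ * Tc with hPdef
  set z := P *ᵥ y with hzdef
  have hWx : Wc *ᵥ x = (1 - lam)⁻¹ • (Tc *ᵥ y) := by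
    funext i
    have h := congrFun e1 i
    simp [Pi.smul_apply, smul_eq_mul] at h ⊢
    field_simp
    linear_combination h
  have hx2 : x = (1 - lam)⁻¹ • z := by
    calc x = 1 *ᵥ x := (one_mulVec x).symm
      _ = (Wc⁻¹ * Wc) *ᵥ x := by rw [hinv1]
      _ = Wc⁻¹ *ᵥ (Wc *ᵥ x) := (mulVec_mulVec _ _ _).symm
      _ = Wc⁻¹ *ᵥ ((1 - lam)⁻¹ • (Tc *ᵥ y)) := by rw [hWx]
      _ = (1 - lam)⁻¹ • (Wc⁻¹ *ᵥ (Tc *ᵥ y)) := mulVec_smul _ _ _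
      _ = (1 - lam)⁻¹ • z := by rw [hzdef, mulVec_mulVec]
  set N := star y ⬝ᵥ y with hNdef
  set A := star y ⬝ᵥ (Tc *ᵥ y) with hAdef
  set B := star z ⬝ᵥ z with hBdef
  set C := star z ⬝ᵥ (Tc *ᵥ z) with hCdef
  have hPH : Pᴴ = Tc * Wc⁻¹ := by
    rw [hPdef, conjTranspose_mul, hTc.eq, conjTranspose_nonsing_inv, hWc.eq]
  have hS1 : star z ⬝ᵥ (Wc *ᵥ y) = A := by
    rw [hzdef, dot_shift, hPH, Matrix.mul_assoc, hinv1, Matrix.mul_one]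
  have hBeq : B = star y ⬝ᵥ ((Tc * Wc⁻¹ ^ 2 * Tc) *ᵥ y) := by
    rw [hBdef, hzdef, dot_shift, hPH, hPdef, sq]
    simp only [Matrix.mul_assoc]
  have hCeq : C = star y ⬝ᵥ ((Tc * Wc⁻¹ * Tc * Wc⁻¹ * Tc) *ᵥ y) := by
    rw [hCdef, hzdef, mulVec_mulVec, dot_shift, hPH, hPdef]
    simp only [Matrix.mul_assoc]
  -- realness
  have hNre : ((N.re : ℝ) : ℂ) = N := by
    have h := herm_quad_real (isHermitian_one (n := Fin n)) y
    simpa [one_mulVec] using h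
  have hAre : ((A.re : ℝ) : ℂ) = A := herm_quad_real hTc y
  have hBre : ((B.re : ℝ) : ℂ) = B := by
    have h := herm_quad_real (isHermitian_one (n := Fin n)) z
    simpa [one_mulVec] using h
  have hCre : ((C.re : ℝ) : ℂ) = C := herm_quad_real hTc z
  have hN0 : N ≠ 0 := star_dot_self_ne_zero hy
  have hNre0 : N.re ≠ 0 := fun h => hN0 (by rw [← hNre, h, Complex.ofReal_zero])
  -- values
  have hval : ∀ (r : ℝ) (X : ℂ), ((X.re : ℝ) : ℂ) = X → r = (X / N).re → X = (r : ℂ) * N := by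
    intro r X hXre hr
    have h1 : X / N = ((X.re / N.re : ℝ) : ℂ) := by
      rw [Complex.ofReal_div, hXre, hNre]
    have hr' : r * N.re = X.re := by
      rw [hr, h1, Complex.ofReal_re]
      field_simp
    calc X = ((X.re : ℝ) : ℂ) := hXre.symm
      _ = ((r * N.re : ℝ) : ℂ) := by rw [hr']
      _ = (r : ℂ) * ((N.re : ℝ) : ℂ) := by push_cast; ring
      _ = (r : ℂ) * N := by rw [hNre]
  have hAval : A = (a : ℂ) * N := hval a A hAre ha
  have hBval : B = (b : ℂ) * N := hval b B hBre (by rw [hb, ← hBeq])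
  have hCval : C = (c : ℂ) * N := hval c C hCre (by rw [hc, ← hCeq])
  -- scalar equation from e2
  have e3 := congrArg (fun v => star z ⬝ᵥ v) e2
  simp only [dotProduct_add, dotProduct_smul, smul_eq_mul] at e3
  rw [hx2] at e3
  simp only [mulVec_smul, dotProduct_smul, smul_eq_mul, hS1, ← hBdef, ← hCdef] at e3
  rw [hAval, hBval, hCval] at e3
  field_simp [hlam1] at e3
  have key : ((a:ℂ) * (lam - 1)^2 - ((α*b : ℝ):ℂ) * (lam - 1) + ((c - α*b : ℝ):ℂ)) * N = 0 := by
    push_cast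
    push_cast at e3
    linear_combination N * e3
  have key2 : (a:ℂ) * (lam - 1)^2 - ((α*b : ℝ):ℂ) * (lam - 1) + ((c - α*b : ℝ):ℂ) = 0 :=
    (mul_eq_zero.mp key).resolve_right hN0
  exact quad_root_abs a b c α ha0 (lam - 1) key2 hΔ
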